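/- Let ε > 0, μ₀, μ₁ ∈ ℝ and σ₀, σ₁ > 0. Set ρ* = (√(σ₀²σ₁² + ε²/4) - ε/2)/(σ₀σ₁). Then the bivariate Gaussian density with means (μ₀, μ₁), variances σ₀², σ₁² and correlation ρ* is the unique minimizer, over all probability densities q' on ℝ² with marginals equal to the Gaussian densities N(μ₀, σ₀²) and N(μ₁, σ₁²), finite second moments and finite differential entropy, of the functional q' ↦ ∫ (x₀ - x₁)²/(2ε) q'(x₀,x₁) dx₀dx₁ - H(q'). -/

import Mathlib

open MeasureTheory

/-- The 1D Gaussian density `N(μ, σ²)`. -/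
noncomputable def gauss1 (μ σ x : ℝ) : ℝ :=
  (Real.sqrt (2 * Real.pi * σ ^ 2))⁻¹ * Real.exp (-(x - μ) ^ 2 / (2 * σ ^ 2))

/-- The bivariate Gaussian density with means `(μ, μ')`, variances `σ², σ'²` and
correlation `ρ`. -/
noncomputable def biGauss (μ μ' σ σ' ρ : ℝ) (x : ℝ × ℝ) : ℝ :=
  (2 * Real.pi * σ * σ' * Real.sqrt (1 - ρ ^ 2))⁻¹ *
    Real.exp (-((x.1 - μ) ^ 2 / σ ^ 2 - 2 * ρ * (x.1 - μ) * (x.2 - μ') / (σ * σ')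
      + (x.2 - μ') ^ 2 / σ' ^ 2) / (2 * (1 - ρ ^ 2)))

/-- Differential entropy `H(f) = -∫ f log f` of a density on `ℝ²`. -/
noncomputable def diffEntropy2 (f : ℝ × ℝ → ℝ) : ℝ :=
  -∫ x : ℝ × ℝ, f x * Real.log (f x)

lemma gauss1_eq (μ σ : ℝ) :
    gauss1 μ σ = ProbabilityTheory.gaussianPDFReal μ ⟨σ ^ 2, sq_nonneg σ⟩ := rfl

lemma gauss1_nonneg (μ σ x : ℝ) : 0 ≤ gauss1 μ σ x :=
  mul_nonneg (inv_nonneg.2 (Real.sqrt_nonneg _)) (Real.exp_pos _).le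

lemma gauss1_pos (μ : ℝ) {σ : ℝ} (hσ : 0 < σ) (x : ℝ) : 0 < gauss1 μ σ x :=
  mul_pos (inv_pos.2 (Real.sqrt_pos.2 (by positivity))) (Real.exp_pos _)

lemma integrable_gauss1 (μ σ : ℝ) : Integrable (gauss1 μ σ) := by
  rw [gauss1_eq]; exact ProbabilityTheory.integrable_gaussianPDFReal μ _

lemma integral_gauss1 (μ : ℝ) {σ : ℝ} (hσ : 0 < σ) : ∫ x, gauss1 μ σ x = 1 := by
  rw [gauss1_eq]
  refine ProbabilityTheory.integral_gaussianPDFReal_eq_one μ ?_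
  intro h
  replace h := congrArg (fun r : NNReal => (r : ℝ)) h
  simp only [NNReal.coe_mk, NNReal.coe_zero] at h
  exact absurd h (by positivity : (0:ℝ) < σ ^ 2).ne'

lemma measurable_gauss1 (μ σ : ℝ) : Measurable (gauss1 μ σ) := by
  rw [gauss1_eq]; exact ProbabilityTheory.measurable_gaussianPDFReal μ _


lemma integrable_sq_exp {b : ℝ} (hb : 0 < b) :
    Integrable (fun x : ℝ => x ^ 2 * Real.exp (-b * x ^ 2)) := by
  have hmeas : AEStronglyMeasurable (fun x : ℝ => x ^ 2 * Real.exp (-b * x ^ 2)) volume := by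
    apply Measurable.aestronglyMeasurable; measurability
  refine Integrable.mono' ((integrable_exp_neg_mul_sq (by positivity : (0:ℝ) < b/2)).const_mul (2/b)) hmeas ?_
  filter_upwards with x
  have h1 : b / 2 * x ^ 2 ≤ Real.exp (b / 2 * x ^ 2) := by
    have := Real.add_one_le_exp (b / 2 * x ^ 2); linarith
  have h2 : x ^ 2 ≤ 2 / b * Real.exp (b / 2 * x ^ 2) := by
    rw [← sub_nonneg]
    have heq : 2 / b * Real.exp (b / 2 * x ^ 2) - x ^ 2 = 2 / b * (Real.exp (b/2*x^2) - b/2*x^2) := by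
      field_simp
    rw [heq]
    have := sub_nonneg.2 h1
    positivity
  rw [Real.norm_eq_abs, abs_of_nonneg (by positivity)]
  calc x ^ 2 * Real.exp (-b * x ^ 2) ≤ (2 / b * Real.exp (b / 2 * x ^ 2)) * Real.exp (-b * x ^ 2) := by
        exact mul_le_mul_of_nonneg_right h2 (Real.exp_pos _).le
    _ = 2 / b * Real.exp (-(b/2) * x ^ 2) := by
        rw [mul_assoc, ← Real.exp_add]; ring_nf

lemma integrable_onePlusSq_exp_shift {b : ℝ} (hb : 0 < b) (m : ℝ) :
    Integrable (fun x : ℝ => (1 + x ^ 2) * Real.exp (-b * (x - m) ^ 2)) := by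
  have h : Integrable (fun t : ℝ => (1 + (t + m) ^ 2) * Real.exp (-b * t ^ 2)) := by
    have h1 := (integrable_exp_neg_mul_sq hb).const_mul (1 + m ^ 2)
    have h2 := (integrable_mul_exp_neg_mul_sq hb).const_mul (2 * m)
    have h3 := integrable_sq_exp hb
    have := (h1.add h2).add h3
    refine this.congr ?_
    filter_upwards with t
    simp only [Pi.add_apply]
    ring
  have := h.comp_sub_right m
  refine this.congr ?_
  filter_upwards with x
  ring_nf

lemma integrable_exp_shift {b : ℝ} (hb : 0 < b) (m : ℝ) :
    Integrable (fun x : ℝ => Real.exp (-b * (x - m) ^ 2)) :=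
  (integrable_exp_neg_mul_sq hb).comp_sub_right m

lemma integrable_poly_gauss2 {a a' : ℝ} (ha : 0 < a) (ha' : 0 < a') (m m' : ℝ) :
    Integrable (fun x : ℝ × ℝ => (1 + x.1 ^ 2 + x.2 ^ 2) *
      (Real.exp (-a * (x.1 - m) ^ 2) * Real.exp (-a' * (x.2 - m') ^ 2))) := by
  have hsq : Integrable (fun t : ℝ => t ^ 2 * Real.exp (-a' * (t - m') ^ 2)) := by
    have := (integrable_onePlusSq_exp_shift ha' m').sub (integrable_exp_shift ha' m')
    refine this.congr ?_; filter_upwards with t; simp only [Pi.sub_apply]; ring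
  have h1 : Integrable (fun x : ℝ × ℝ => ((1 + x.1 ^ 2) * Real.exp (-a * (x.1 - m) ^ 2)) *
      Real.exp (-a' * (x.2 - m') ^ 2)) (volume.prod volume) :=
    (integrable_onePlusSq_exp_shift ha m).mul_prod (integrable_exp_shift ha' m')
  have h2 : Integrable (fun x : ℝ × ℝ => Real.exp (-a * (x.1 - m) ^ 2) *
      (x.2 ^ 2 * Real.exp (-a' * (x.2 - m') ^ 2))) (volume.prod volume) :=
    (integrable_exp_shift ha m).mul_prod hsq
  rw [MeasureTheory.Measure.volume_eq_prod]
  refine (h1.add h2).congr ?_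
  filter_upwards with x
  simp only [Pi.add_apply]
  ring




lemma biGauss_factor (μ₀ μ₁ σ₀ σ₁ ρ : ℝ) (hσ₀ : 0 < σ₀) (hσ₁ : 0 < σ₁) (hρ : ρ ^ 2 < 1)
    (x : ℝ × ℝ) :
    biGauss μ₀ μ₁ σ₀ σ₁ ρ x
      = gauss1 μ₀ σ₀ x.1 *
        gauss1 (μ₁ + ρ * σ₁ / σ₀ * (x.1 - μ₀)) (σ₁ * Real.sqrt (1 - ρ ^ 2)) x.2 := by
  have h1 : (0:ℝ) < 1 - ρ ^ 2 := by linarith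
  set r := Real.sqrt (1 - ρ ^ 2) with hr
  have hrpos : 0 < r := Real.sqrt_pos.2 h1
  have hr2 : r ^ 2 = 1 - ρ ^ 2 := Real.sq_sqrt h1.le
  have h2pi : (0:ℝ) ≤ 2 * Real.pi := by positivity
  unfold biGauss gauss1
  have e0 : Real.sqrt (2 * Real.pi * σ₀ ^ 2) = Real.sqrt (2 * Real.pi) * σ₀ := by
    rw [Real.sqrt_mul h2pi, Real.sqrt_sq hσ₀.le]
  have e1 : Real.sqrt (2 * Real.pi * (σ₁ * r) ^ 2) = Real.sqrt (2 * Real.pi) * (σ₁ * r) := by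
    rw [Real.sqrt_mul h2pi, Real.sqrt_sq (by positivity)]
  rw [e0, e1]
  have hsq : Real.sqrt (2 * Real.pi) * Real.sqrt (2 * Real.pi) = 2 * Real.pi := Real.mul_self_sqrt h2pi
  have hcoef : ((Real.sqrt (2 * Real.pi) * σ₀)⁻¹ * (Real.sqrt (2 * Real.pi) * (σ₁ * r))⁻¹)
      = (2 * Real.pi * σ₀ * σ₁ * r)⁻¹ := by
    rw [← mul_inv]
    congr 1
    calc Real.sqrt (2*Real.pi) * σ₀ * (Real.sqrt (2*Real.pi) * (σ₁ * r))
        = (Real.sqrt (2*Real.pi) * Real.sqrt (2*Real.pi)) * σ₀ * σ₁ * r := by ring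
      _ = 2 * Real.pi * σ₀ * σ₁ * r := by rw [hsq]
  symm
  rw [mul_mul_mul_comm, ← Real.exp_add, hcoef]
  congr 1
  have hd2 : (σ₁ * r) ^ 2 = σ₁ ^ 2 * (1 - ρ ^ 2) := by rw [mul_pow, hr2]
  rw [hd2]
  field_simp
  ring

lemma biGauss_swap (μ₀ μ₁ σ₀ σ₁ ρ x₀ x₁ : ℝ) :
    biGauss μ₀ μ₁ σ₀ σ₁ ρ (x₀, x₁) = biGauss μ₁ μ₀ σ₁ σ₀ ρ (x₁, x₀) := by
  unfold biGauss
  congr 1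
  · congr 2; ring
  · congr 1; ring

lemma biGauss_pos (μ₀ μ₁ : ℝ) {σ₀ σ₁ ρ : ℝ} (hσ₀ : 0 < σ₀) (hσ₁ : 0 < σ₁) (hρ : ρ ^ 2 < 1)
    (x : ℝ × ℝ) : 0 < biGauss μ₀ μ₁ σ₀ σ₁ ρ x := by
  have h1 : (0:ℝ) < 1 - ρ ^ 2 := by linarith
  unfold biGauss
  have : 0 < 2 * Real.pi * σ₀ * σ₁ * Real.sqrt (1 - ρ ^ 2) := by
    have := Real.sqrt_pos.2 h1
    have := Real.pi_pos
    positivity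
  positivity

lemma measurable_biGauss (μ₀ μ₁ σ₀ σ₁ ρ : ℝ) : Measurable (biGauss μ₀ μ₁ σ₀ σ₁ ρ) := by
  unfold biGauss
  fun_prop

lemma biGauss_marg1 (μ₀ μ₁ : ℝ) {σ₀ σ₁ ρ : ℝ} (hσ₀ : 0 < σ₀) (hσ₁ : 0 < σ₁) (hρ : ρ ^ 2 < 1)
    (x₀ : ℝ) : ∫ x₁, biGauss μ₀ μ₁ σ₀ σ₁ ρ (x₀, x₁) = gauss1 μ₀ σ₀ x₀ := by
  have h1 : (0:ℝ) < 1 - ρ ^ 2 := by linarith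
  have hd : 0 < σ₁ * Real.sqrt (1 - ρ ^ 2) := by
    have := Real.sqrt_pos.2 h1; positivity
  calc ∫ x₁, biGauss μ₀ μ₁ σ₀ σ₁ ρ (x₀, x₁)
      = ∫ x₁, gauss1 μ₀ σ₀ x₀ *
          gauss1 (μ₁ + ρ * σ₁ / σ₀ * (x₀ - μ₀)) (σ₁ * Real.sqrt (1 - ρ ^ 2)) x₁ := by
        congr 1; funext x₁; exact biGauss_factor μ₀ μ₁ σ₀ σ₁ ρ hσ₀ hσ₁ hρ (x₀, x₁)
    _ = gauss1 μ₀ σ₀ x₀ * ∫ x₁, gauss1 (μ₁ + ρ * σ₁ / σ₀ * (x₀ - μ₀)) (σ₁ * Real.sqrt (1 - ρ ^ 2)) x₁ :=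
        integral_const_mul _ _
    _ = gauss1 μ₀ σ₀ x₀ := by rw [integral_gauss1 _ hd, mul_one]

lemma biGauss_marg0 (μ₀ μ₁ : ℝ) {σ₀ σ₁ ρ : ℝ} (hσ₀ : 0 < σ₀) (hσ₁ : 0 < σ₁) (hρ : ρ ^ 2 < 1)
    (x₁ : ℝ) : ∫ x₀, biGauss μ₀ μ₁ σ₀ σ₁ ρ (x₀, x₁) = gauss1 μ₁ σ₁ x₁ := by
  have : ∀ x₀, biGauss μ₀ μ₁ σ₀ σ₁ ρ (x₀, x₁) = biGauss μ₁ μ₀ σ₁ σ₀ ρ (x₁, x₀) :=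
    fun x₀ => biGauss_swap μ₀ μ₁ σ₀ σ₁ ρ x₀ x₁
  simp_rw [this]
  exact biGauss_marg1 μ₁ μ₀ hσ₁ hσ₀ hρ x₁

lemma biGauss_le (μ₀ μ₁ : ℝ) {σ₀ σ₁ ρ : ℝ} (hσ₀ : 0 < σ₀) (hσ₁ : 0 < σ₁)
    (hρ0 : 0 ≤ ρ) (hρ : ρ ^ 2 < 1) (x : ℝ × ℝ) :
    biGauss μ₀ μ₁ σ₀ σ₁ ρ x ≤ (2 * Real.pi * σ₀ * σ₁ * Real.sqrt (1 - ρ ^ 2))⁻¹ *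
      (Real.exp (-(1 / (2 * (1 + ρ) * σ₀ ^ 2)) * (x.1 - μ₀) ^ 2) *
        Real.exp (-(1 / (2 * (1 + ρ) * σ₁ ^ 2)) * (x.2 - μ₁) ^ 2)) := by
  have h1 : (0:ℝ) < 1 - ρ ^ 2 := by linarith
  have hρ1 : (0:ℝ) < 1 + ρ := by nlinarith
  unfold biGauss
  have hZ : 0 < (2 * Real.pi * σ₀ * σ₁ * Real.sqrt (1 - ρ ^ 2))⁻¹ := by
    have := Real.sqrt_pos.2 h1
    have := Real.pi_pos
    positivity
  refine mul_le_mul_of_nonneg_left ?_ hZ.le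
  rw [← Real.exp_add]
  apply Real.exp_le_exp.2
  rw [div_le_iff₀ (by positivity : (0:ℝ) < 2 * (1 - ρ ^ 2)), ← sub_nonneg]
  have heq : (-(1 / (2 * (1 + ρ) * σ₀ ^ 2)) * (x.1 - μ₀) ^ 2 +
        -(1 / (2 * (1 + ρ) * σ₁ ^ 2)) * (x.2 - μ₁) ^ 2) * (2 * (1 - ρ ^ 2)) -
      -((x.1 - μ₀) ^ 2 / σ₀ ^ 2 - 2 * ρ * (x.1 - μ₀) * (x.2 - μ₁) / (σ₀ * σ₁)
        + (x.2 - μ₁) ^ 2 / σ₁ ^ 2)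
      = ρ * ((x.1 - μ₀) / σ₀ - (x.2 - μ₁) / σ₁) ^ 2 := by
    field_simp
    ring
  rw [heq]
  positivity


lemma quad2_abs_bound (A B C D E₁ E₂ m m' : ℝ) :
    ∃ K : ℝ, ∀ x : ℝ × ℝ,
      |A + B * (x.1 - m) ^ 2 + C * ((x.1 - m) * (x.2 - m')) + D * (x.2 - m') ^ 2
        + E₁ * (x.1 - m) + E₂ * (x.2 - m')| ≤ K * (1 + x.1 ^ 2 + x.2 ^ 2) := by
  set P : ℝ := 2 + 2 * m ^ 2 + 2 * m' ^ 2 with hP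
  refine ⟨(|A| + |B| + |C| + |D| + |E₁| + |E₂|) * P, fun x => ?_⟩
  set X : ℝ := 1 + x.1 ^ 2 + x.2 ^ 2 with hX
  have hX1 : 1 ≤ X := by nlinarith [sq_nonneg x.1, sq_nonneg x.2]
  have hP2 : 2 ≤ P := by nlinarith [sq_nonneg m, sq_nonneg m']
  have hPX : 1 ≤ P * X := by nlinarith
  have h1 : (x.1 - m) ^ 2 ≤ P * X := by rw [hP, hX]; nlinarith [sq_nonneg x.1, sq_nonneg x.2, sq_nonneg m', sq_nonneg m, sq_nonneg (x.1*m), sq_nonneg (x.1 + m), sq_nonneg (m*x.2), sq_nonneg (m'*x.1), sq_nonneg (m'*x.2), sq_nonneg (m*x.1 - 1)]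
  have h2 : (x.2 - m') ^ 2 ≤ P * X := by rw [hP, hX]; nlinarith [sq_nonneg x.1, sq_nonneg x.2, sq_nonneg m, sq_nonneg m', sq_nonneg (x.2 + m'), sq_nonneg (m*x.1), sq_nonneg (m*x.2), sq_nonneg (m'*x.1), sq_nonneg (m'*x.2 - 1)]
  have h3 : |(x.1 - m) * (x.2 - m')| ≤ P * X := by
    rw [abs_mul]
    nlinarith [sq_abs (x.1 - m), sq_abs (x.2 - m'), sq_nonneg (|x.1 - m| - |x.2 - m'|), abs_nonneg (x.1 - m), abs_nonneg (x.2 - m')]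
  have h4 : |x.1 - m| ≤ P * X := by
    nlinarith [abs_nonneg (x.1 - m), sq_abs (x.1 - m), sq_nonneg (|x.1 - m| - 1)]
  have h5 : |x.2 - m'| ≤ P * X := by
    nlinarith [abs_nonneg (x.2 - m'), sq_abs (x.2 - m'), sq_nonneg (|x.2 - m'| - 1)]
  have hPXpos : 0 ≤ P * X := by linarith
  calc |A + B * (x.1 - m) ^ 2 + C * ((x.1 - m) * (x.2 - m')) + D * (x.2 - m') ^ 2
        + E₁ * (x.1 - m) + E₂ * (x.2 - m')|
      ≤ |A| + |B * (x.1 - m) ^ 2| + |C * ((x.1 - m) * (x.2 - m'))| + |D * (x.2 - m') ^ 2|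
        + |E₁ * (x.1 - m)| + |E₂ * (x.2 - m')| := by
        exact (abs_add_le _ _).trans (by
          gcongr
          exact (abs_add_le _ _).trans (by
            gcongr
            exact (abs_add_le _ _).trans (by
              gcongr
              exact (abs_add_le _ _).trans (by
                gcongr
                exact abs_add_le _ _))))
    _ ≤ |A| * (P * X) + |B| * (P * X) + |C| * (P * X) + |D| * (P * X)
        + |E₁| * (P * X) + |E₂| * (P * X) := by
        have hA : |A| ≤ |A| * (P * X) := le_mul_of_one_le_right (abs_nonneg A) hPX
        have hB : |B * (x.1 - m) ^ 2| ≤ |B| * (P * X) := by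
          rw [abs_mul, abs_of_nonneg (sq_nonneg (x.1 - m))]
          exact mul_le_mul_of_nonneg_left h1 (abs_nonneg B)
        have hC : |C * ((x.1 - m) * (x.2 - m'))| ≤ |C| * (P * X) := by
          rw [abs_mul]; exact mul_le_mul_of_nonneg_left h3 (abs_nonneg C)
        have hD : |D * (x.2 - m') ^ 2| ≤ |D| * (P * X) := by
          rw [abs_mul, abs_of_nonneg (sq_nonneg (x.2 - m'))]
          exact mul_le_mul_of_nonneg_left h2 (abs_nonneg D)
        have hE1 : |E₁ * (x.1 - m)| ≤ |E₁| * (P * X) := by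
          rw [abs_mul]; exact mul_le_mul_of_nonneg_left h4 (abs_nonneg E₁)
        have hE2 : |E₂ * (x.2 - m')| ≤ |E₂| * (P * X) := by
          rw [abs_mul]; exact mul_le_mul_of_nonneg_left h5 (abs_nonneg E₂)
        linarith
    _ = (|A| + |B| + |C| + |D| + |E₁| + |E₂|) * P * (1 + x.1 ^ 2 + x.2 ^ 2) := by
        rw [hX]; ring

lemma integrable_mul_biGauss (μ₀ μ₁ : ℝ) {σ₀ σ₁ ρ : ℝ} (hσ₀ : 0 < σ₀) (hσ₁ : 0 < σ₁)
    (hρ0 : 0 ≤ ρ) (hρ : ρ ^ 2 < 1) {f : ℝ × ℝ → ℝ}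
    (hf : AEStronglyMeasurable f (volume : Measure (ℝ × ℝ))) {K : ℝ}
    (hK : ∀ x, |f x| ≤ K * (1 + x.1 ^ 2 + x.2 ^ 2)) :
    Integrable (fun x => f x * biGauss μ₀ μ₁ σ₀ σ₁ ρ x) := by
  have h1 : (0:ℝ) < 1 - ρ ^ 2 := by linarith
  have hρ1 : (0:ℝ) < 1 + ρ := by nlinarith
  have hKnn : 0 ≤ K := by
    have := (abs_nonneg (f (0, 0))).trans (hK (0, 0))
    simpa using by nlinarith [this]
  set Z : ℝ := (2 * Real.pi * σ₀ * σ₁ * Real.sqrt (1 - ρ ^ 2))⁻¹ with hZdef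
  have hZ : 0 ≤ Z := by
    have := Real.sqrt_nonneg (1 - ρ ^ 2)
    have := Real.pi_pos
    positivity
  have hbase := (integrable_poly_gauss2
      (by positivity : (0:ℝ) < 1 / (2 * (1 + ρ) * σ₀ ^ 2))
      (by positivity : (0:ℝ) < 1 / (2 * (1 + ρ) * σ₁ ^ 2)) μ₀ μ₁).const_mul (K * Z)
  refine Integrable.mono' hbase ?_ ?_
  · exact hf.mul (measurable_biGauss μ₀ μ₁ σ₀ σ₁ ρ).aestronglyMeasurable
  · filter_upwards with x
    rw [Real.norm_eq_abs, abs_mul, abs_of_nonneg (biGauss_pos μ₀ μ₁ hσ₀ hσ₁ hρ x).le]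
    calc |f x| * biGauss μ₀ μ₁ σ₀ σ₁ ρ x
        ≤ (K * (1 + x.1 ^ 2 + x.2 ^ 2)) * (Z *
            (Real.exp (-(1 / (2 * (1 + ρ) * σ₀ ^ 2)) * (x.1 - μ₀) ^ 2) *
             Real.exp (-(1 / (2 * (1 + ρ) * σ₁ ^ 2)) * (x.2 - μ₁) ^ 2))) := by
          apply mul_le_mul (hK x) (biGauss_le μ₀ μ₁ hσ₀ hσ₁ hρ0 hρ x)
            (biGauss_pos μ₀ μ₁ hσ₀ hσ₁ hρ x).le (by positivity)
      _ = K * Z * ((1 + x.1 ^ 2 + x.2 ^ 2) *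
            (Real.exp (-(1 / (2 * (1 + ρ) * σ₀ ^ 2)) * (x.1 - μ₀) ^ 2) *
             Real.exp (-(1 / (2 * (1 + ρ) * σ₁ ^ 2)) * (x.2 - μ₁) ^ 2))) := by ring

lemma integrable_biGauss (μ₀ μ₁ : ℝ) {σ₀ σ₁ ρ : ℝ} (hσ₀ : 0 < σ₀) (hσ₁ : 0 < σ₁)
    (hρ0 : 0 ≤ ρ) (hρ : ρ ^ 2 < 1) : Integrable (biGauss μ₀ μ₁ σ₀ σ₁ ρ) := by
  have := integrable_mul_biGauss μ₀ μ₁ hσ₀ hσ₁ hρ0 hρ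
    (f := fun _ => (1:ℝ)) aestronglyMeasurable_const (K := 1)
    (fun x => by simp; nlinarith [sq_nonneg x.1, sq_nonneg x.2])
  simpa using this

lemma integral_biGauss (μ₀ μ₁ : ℝ) {σ₀ σ₁ ρ : ℝ} (hσ₀ : 0 < σ₀) (hσ₁ : 0 < σ₁)
    (hρ0 : 0 ≤ ρ) (hρ : ρ ^ 2 < 1) : ∫ x, biGauss μ₀ μ₁ σ₀ σ₁ ρ x = 1 := by
  have hint := integrable_biGauss μ₀ μ₁ hσ₀ hσ₁ hρ0 hρ
  rw [MeasureTheory.Measure.volume_eq_prod] at hint ⊢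
  rw [MeasureTheory.integral_prod _ hint]
  have : ∀ x₀ : ℝ, (∫ x₁, biGauss μ₀ μ₁ σ₀ σ₁ ρ (x₀, x₁)) = gauss1 μ₀ σ₀ x₀ :=
    fun x₀ => biGauss_marg1 μ₀ μ₁ hσ₀ hσ₁ hρ x₀
  simp_rw [this]
  exact integral_gauss1 μ₀ hσ₀

lemma klterm_nonneg {a b : ℝ} (ha : 0 ≤ a) (hb : 0 < b) :
    0 ≤ a * Real.log a - a * Real.log b - a + b := by
  rcases eq_or_lt_of_le ha with h | h
  · simp [← h]; positivity
  · have hd : 0 < b / a := div_pos hb h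
    have := Real.log_le_sub_one_of_pos hd
    rw [Real.log_div hb.ne' h.ne'] at this
    have h2 : a * (Real.log b - Real.log a) ≤ a * (b / a - 1) :=
      mul_le_mul_of_nonneg_left this ha
    have h3 : a * (b / a - 1) = b - a := by field_simp
    linarith [h2, h3.le, h3.ge]

lemma klterm_eq_zero {a b : ℝ} (ha : 0 ≤ a) (hb : 0 < b)
    (h : a * Real.log a - a * Real.log b - a + b = 0) : a = b := by
  rcases eq_or_lt_of_le ha with h0 | h0
  · exfalso; rw [← h0] at h; simp at h; linarith
  · by_contra hne
    have hd : 0 < b / a := div_pos hb h0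
    have hd1 : b / a ≠ 1 := by
      intro hc
      exact hne ((div_eq_one_iff_eq h0.ne').1 hc).symm
    have := Real.log_lt_sub_one_of_pos hd hd1
    rw [Real.log_div hb.ne' h0.ne'] at this
    have h2 : a * (Real.log b - Real.log a) < a * (b / a - 1) :=
      (mul_lt_mul_iff_right₀ h0).2 this
    have h3 : a * (b / a - 1) = b - a := by field_simp
    linarith [h2, h3.le, h3.ge]

lemma integral_fst_section {φ : ℝ → ℝ} {w : ℝ × ℝ → ℝ} {g : ℝ → ℝ}
    (hint : Integrable (fun x : ℝ × ℝ => φ x.1 * w x))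
    (hmarg : ∀ᵐ t ∂(volume : Measure ℝ), (∫ s, w (t, s)) = g t) :
    ∫ x : ℝ × ℝ, φ x.1 * w x = ∫ t, φ t * g t := by
  rw [MeasureTheory.Measure.volume_eq_prod] at hint ⊢
  rw [MeasureTheory.integral_prod _ hint]
  refine integral_congr_ae ?_
  filter_upwards [hmarg] with t ht
  rw [integral_const_mul, ht]

lemma integral_snd_section {φ : ℝ → ℝ} {w : ℝ × ℝ → ℝ} {g : ℝ → ℝ}
    (hint : Integrable (fun x : ℝ × ℝ => φ x.2 * w x))
    (hmarg : ∀ᵐ t ∂(volume : Measure ℝ), (∫ s, w (s, t)) = g t) :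
    ∫ x : ℝ × ℝ, φ x.2 * w x = ∫ t, φ t * g t := by
  rw [MeasureTheory.Measure.volume_eq_prod] at hint ⊢
  rw [MeasureTheory.integral_prod_symm _ hint]
  refine integral_congr_ae ?_
  filter_upwards [hmarg] with t ht
  rw [integral_const_mul, ht]

set_option maxHeartbeats 1000000 in
/-- Let `ε > 0` and `ρ* = (√(σ₀²σ₁² + ε²/4) - ε/2)/(σ₀σ₁)`. The bivariate
Gaussian density with means `(μ₀, μ₁)`, variances `σ₀², σ₁²` and correlation `ρ*` is the
unique minimizer of the static Schrödinger Bridge (entropic OT) objective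
`q' ↦ ∫ (x₀-x₁)²/(2ε) q' - H(q')` over all probability densities on `ℝ²` with marginals
`N(μ₀, σ₀²)`, `N(μ₁, σ₁²)`, finite second moments and finite differential entropy: any
such `q'` differing from it on a set of positive Lebesgue measure has strictly larger
objective value. -/
theorem biGauss_rhoStar_unique_SB_minimizer (μ₀ μ₁ σ₀ σ₁ ε ρstar : ℝ)
    (hσ₀ : 0 < σ₀) (hσ₁ : 0 < σ₁) (hε : 0 < ε)
    (hρstar : ρstar = (Real.sqrt (σ₀ ^ 2 * σ₁ ^ 2 + ε ^ 2 / 4) - ε / 2) / (σ₀ * σ₁))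
    (q' : ℝ × ℝ → ℝ)
    (hq'meas : Measurable q')
    (hq'nonneg : ∀ x, 0 ≤ q' x)
    (hq'prob : ∫ x : ℝ × ℝ, q' x = 1)
    (hmarg0 : ∀ᵐ x₀ ∂(volume : Measure ℝ), (∫ x₁ : ℝ, q' (x₀, x₁)) = gauss1 μ₀ σ₀ x₀)
    (hmarg1 : ∀ᵐ x₁ ∂(volume : Measure ℝ), (∫ x₀ : ℝ, q' (x₀, x₁)) = gauss1 μ₁ σ₁ x₁)
    (hmom : Integrable (fun x : ℝ × ℝ => (x.1 ^ 2 + x.2 ^ 2) * q' x))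
    (hent : Integrable (fun x : ℝ × ℝ => q' x * Real.log (q' x)))
    (hne : ¬ (q' =ᵐ[(volume : Measure (ℝ × ℝ))] biGauss μ₀ μ₁ σ₀ σ₁ ρstar)) :
    (∫ x : ℝ × ℝ, (x.1 - x.2) ^ 2 / (2 * ε) * biGauss μ₀ μ₁ σ₀ σ₁ ρstar x) -
        diffEntropy2 (biGauss μ₀ μ₁ σ₀ σ₁ ρstar) <
      (∫ x : ℝ × ℝ, (x.1 - x.2) ^ 2 / (2 * ε) * q' x) - diffEntropy2 q' := by
  -- basic facts about ρstar
  have hs : (0:ℝ) < σ₀ * σ₁ := mul_pos hσ₀ hσ₁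
  have hargnn : (0:ℝ) ≤ σ₀ ^ 2 * σ₁ ^ 2 + ε ^ 2 / 4 := by positivity
  have hS2 : (Real.sqrt (σ₀ ^ 2 * σ₁ ^ 2 + ε ^ 2 / 4)) ^ 2 = σ₀ ^ 2 * σ₁ ^ 2 + ε ^ 2 / 4 :=
    Real.sq_sqrt hargnn
  have hSpos : 0 < Real.sqrt (σ₀ ^ 2 * σ₁ ^ 2 + ε ^ 2 / 4) := Real.sqrt_pos.2 (by positivity)
  have hShalf : ε / 2 < Real.sqrt (σ₀ ^ 2 * σ₁ ^ 2 + ε ^ 2 / 4) := by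
    nlinarith [hS2, hSpos, mul_pos (mul_pos hσ₀ hσ₀) (mul_pos hσ₁ hσ₁)]
  have hρ0 : 0 < ρstar := by
    rw [hρstar]; exact div_pos (by linarith) hs
  have hρ1 : ρstar < 1 := by
    rw [hρstar, div_lt_one hs]
    nlinarith [hS2, hSpos]
  have hρsq : ρstar ^ 2 < 1 := by nlinarith
  have h1 : (0:ℝ) < 1 - ρstar ^ 2 := by linarith
  have hrel : ρstar * ε = σ₀ * σ₁ * (1 - ρstar ^ 2) := by
    have h1' : ρstar * (σ₀ * σ₁) = Real.sqrt (σ₀ ^ 2 * σ₁ ^ 2 + ε ^ 2 / 4) - ε / 2 := by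
      rw [hρstar, div_mul_cancel₀ _ hs.ne']
    have h2 : (ρstar * (σ₀ * σ₁) + ε / 2) ^ 2 = σ₀ ^ 2 * σ₁ ^ 2 + ε ^ 2 / 4 := by
      rw [h1', sub_add_cancel, hS2]
    refine mul_left_cancel₀ hs.ne' ?_
    nlinarith [h2]
  have hεe : ε = σ₀ * σ₁ * (1 - ρstar ^ 2) / ρstar := by
    field_simp
    linarith [hrel]
  set q : ℝ × ℝ → ℝ := biGauss μ₀ μ₁ σ₀ σ₁ ρstar with hq
  have hqpos : ∀ x, 0 < q x := fun x => biGauss_pos μ₀ μ₁ hσ₀ hσ₁ hρsq x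
  set Z : ℝ := 2 * Real.pi * σ₀ * σ₁ * Real.sqrt (1 - ρstar ^ 2) with hZ
  have hZpos : 0 < Z := by
    rw [hZ]
    have := Real.sqrt_pos.2 h1
    have := Real.pi_pos
    positivity
  have hlog : ∀ x : ℝ × ℝ, Real.log (q x) = -Real.log Z -
      ((x.1 - μ₀) ^ 2 / σ₀ ^ 2 - 2 * ρstar * (x.1 - μ₀) * (x.2 - μ₁) / (σ₀ * σ₁)
        + (x.2 - μ₁) ^ 2 / σ₁ ^ 2) / (2 * (1 - ρstar ^ 2)) := by
    intro x
    rw [hq]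
    unfold biGauss
    rw [Real.log_mul (by rw [← hZ]; exact (inv_pos.2 hZpos).ne') (Real.exp_ne_zero _),
      Real.log_exp, ← hZ, Real.log_inv]
    ring
  -- the two single-variable functions
  set F : ℝ → ℝ := fun t => (t - μ₀) ^ 2 / (2 * ε) - (t - μ₀) ^ 2 / (2 * σ₀ ^ 2 * (1 - ρstar ^ 2))
      + (μ₀ - μ₁) * (t - μ₀) / ε + (μ₀ - μ₁) ^ 2 / (2 * ε) - Real.log Z with hF
  set G : ℝ → ℝ := fun t => (t - μ₁) ^ 2 / (2 * ε) - (t - μ₁) ^ 2 / (2 * σ₁ ^ 2 * (1 - ρstar ^ 2))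
      - (μ₀ - μ₁) * (t - μ₁) / ε with hG
  have hFmeas : Measurable F := by rw [hF]; fun_prop
  have hGmeas : Measurable G := by rw [hG]; fun_prop
  have hkey : ∀ x : ℝ × ℝ, (x.1 - x.2) ^ 2 / (2 * ε) = F x.1 + G x.2 - Real.log (q x) := by
    intro x
    rw [hlog x, hF, hG]
    simp only
    rw [hεe]
    have hρne : ρstar ≠ 0 := hρ0.ne'
    field_simp
    ring
  -- integrability of q'
  have hq'int : Integrable q' := by
    by_contra hcon
    rw [integral_undef hcon] at hq'prob
    norm_num at hq'prob
  -- wrapper for integrability against q'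
  have wrap' : ∀ {f : ℝ × ℝ → ℝ}, AEStronglyMeasurable f (volume : Measure (ℝ × ℝ)) →
      ∀ {K : ℝ}, (∀ x, |f x| ≤ K * (1 + x.1 ^ 2 + x.2 ^ 2)) →
      Integrable (fun x => f x * q' x) := by
    intro f hf K hK
    have hKnn : 0 ≤ K := by nlinarith [(abs_nonneg (f (0, 0))).trans (hK (0, 0))]
    refine Integrable.mono' ((hq'int.const_mul K).add (hmom.const_mul K))
      (hf.mul hq'meas.aestronglyMeasurable) ?_
    filter_upwards with x
    rw [Real.norm_eq_abs, abs_mul, abs_of_nonneg (hq'nonneg x)]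
    have := mul_le_mul_of_nonneg_right (hK x) (hq'nonneg x)
    calc |f x| * q' x ≤ K * (1 + x.1 ^ 2 + x.2 ^ 2) * q' x := this
      _ = K * q' x + K * ((x.1 ^ 2 + x.2 ^ 2) * q' x) := by ring
  have wrapq : ∀ {f : ℝ × ℝ → ℝ}, AEStronglyMeasurable f (volume : Measure (ℝ × ℝ)) →
      ∀ {K : ℝ}, (∀ x, |f x| ≤ K * (1 + x.1 ^ 2 + x.2 ^ 2)) →
      Integrable (fun x => f x * q x) := by
    intro f hf K hK
    exact integrable_mul_biGauss μ₀ μ₁ hσ₀ hσ₁ hρ0.le hρsq hf hK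
  -- bounds
  obtain ⟨Kc, hKc⟩ := quad2_abs_bound ((μ₀ - μ₁) ^ 2 / (2 * ε)) (1 / (2 * ε)) (-(1 / ε))
    (1 / (2 * ε)) ((μ₀ - μ₁) / ε) (-((μ₀ - μ₁) / ε)) μ₀ μ₁
  have hcform : ∀ x : ℝ × ℝ, (x.1 - x.2) ^ 2 / (2 * ε) =
      (μ₀ - μ₁) ^ 2 / (2 * ε) + (1 / (2 * ε)) * (x.1 - μ₀) ^ 2
        + (-(1 / ε)) * ((x.1 - μ₀) * (x.2 - μ₁)) + (1 / (2 * ε)) * (x.2 - μ₁) ^ 2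
        + ((μ₀ - μ₁) / ε) * (x.1 - μ₀) + (-((μ₀ - μ₁) / ε)) * (x.2 - μ₁) := by
    intro x; field_simp; ring
  have hcbound : ∀ x : ℝ × ℝ, |(x.1 - x.2) ^ 2 / (2 * ε)| ≤ Kc * (1 + x.1 ^ 2 + x.2 ^ 2) :=
    fun x => by rw [hcform x]; exact hKc x
  obtain ⟨KF, hKF⟩ := quad2_abs_bound ((μ₀ - μ₁) ^ 2 / (2 * ε) - Real.log Z)
    (1 / (2 * ε) - 1 / (2 * σ₀ ^ 2 * (1 - ρstar ^ 2))) 0 0 ((μ₀ - μ₁) / ε) 0 μ₀ μ₁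
  have hFbound : ∀ x : ℝ × ℝ, |F x.1| ≤ KF * (1 + x.1 ^ 2 + x.2 ^ 2) := by
    intro x
    have : F x.1 = ((μ₀ - μ₁) ^ 2 / (2 * ε) - Real.log Z)
        + (1 / (2 * ε) - 1 / (2 * σ₀ ^ 2 * (1 - ρstar ^ 2))) * (x.1 - μ₀) ^ 2
        + 0 * ((x.1 - μ₀) * (x.2 - μ₁)) + 0 * (x.2 - μ₁) ^ 2
        + ((μ₀ - μ₁) / ε) * (x.1 - μ₀) + 0 * (x.2 - μ₁) := by
      rw [hF]; simp only; field_simp; ring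
    rw [this]; exact hKF x
  obtain ⟨KG, hKG⟩ := quad2_abs_bound 0 0 0
    (1 / (2 * ε) - 1 / (2 * σ₁ ^ 2 * (1 - ρstar ^ 2))) 0 (-((μ₀ - μ₁) / ε)) μ₀ μ₁
  have hGbound : ∀ x : ℝ × ℝ, |G x.2| ≤ KG * (1 + x.1 ^ 2 + x.2 ^ 2) := by
    intro x
    have : G x.2 = 0 + 0 * (x.1 - μ₀) ^ 2 + 0 * ((x.1 - μ₀) * (x.2 - μ₁))
        + (1 / (2 * ε) - 1 / (2 * σ₁ ^ 2 * (1 - ρstar ^ 2))) * (x.2 - μ₁) ^ 2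
        + 0 * (x.1 - μ₀) + (-((μ₀ - μ₁) / ε)) * (x.2 - μ₁) := by
      rw [hG]; simp only; field_simp; ring
    rw [this]; exact hKG x
  obtain ⟨KL, hKL⟩ := quad2_abs_bound (-Real.log Z)
    (-(1 / (2 * (1 - ρstar ^ 2) * σ₀ ^ 2))) (ρstar / (σ₀ * σ₁ * (1 - ρstar ^ 2)))
    (-(1 / (2 * (1 - ρstar ^ 2) * σ₁ ^ 2))) 0 0 μ₀ μ₁
  have hLbound : ∀ x : ℝ × ℝ, |Real.log (q x)| ≤ KL * (1 + x.1 ^ 2 + x.2 ^ 2) := by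
    intro x
    have : Real.log (q x) = (-Real.log Z)
        + (-(1 / (2 * (1 - ρstar ^ 2) * σ₀ ^ 2))) * (x.1 - μ₀) ^ 2
        + (ρstar / (σ₀ * σ₁ * (1 - ρstar ^ 2))) * ((x.1 - μ₀) * (x.2 - μ₁))
        + (-(1 / (2 * (1 - ρstar ^ 2) * σ₁ ^ 2))) * (x.2 - μ₁) ^ 2
        + 0 * (x.1 - μ₀) + 0 * (x.2 - μ₁) := by
      rw [hlog x]; field_simp; ring
    rw [this]; exact hKL x
  -- measurability helpers
  have hcmeas : AEStronglyMeasurable (fun x : ℝ × ℝ => (x.1 - x.2) ^ 2 / (2 * ε))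
      (volume : Measure (ℝ × ℝ)) := by apply Measurable.aestronglyMeasurable; fun_prop
  have hFmeas2 : AEStronglyMeasurable (fun x : ℝ × ℝ => F x.1) (volume : Measure (ℝ × ℝ)) :=
    (hFmeas.comp measurable_fst).aestronglyMeasurable
  have hGmeas2 : AEStronglyMeasurable (fun x : ℝ × ℝ => G x.2) (volume : Measure (ℝ × ℝ)) :=
    (hGmeas.comp measurable_snd).aestronglyMeasurable
  have hLmeas : AEStronglyMeasurable (fun x : ℝ × ℝ => Real.log (q x))
      (volume : Measure (ℝ × ℝ)) :=
    ((measurable_biGauss μ₀ μ₁ σ₀ σ₁ ρstar).log).aestronglyMeasurable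
  -- all the integrabilities
  have Ic' : Integrable (fun x : ℝ × ℝ => (x.1 - x.2) ^ 2 / (2 * ε) * q' x) := wrap' hcmeas hcbound
  have Icq : Integrable (fun x : ℝ × ℝ => (x.1 - x.2) ^ 2 / (2 * ε) * q x) := wrapq hcmeas hcbound
  have IF' : Integrable (fun x : ℝ × ℝ => F x.1 * q' x) := wrap' hFmeas2 hFbound
  have IFq : Integrable (fun x : ℝ × ℝ => F x.1 * q x) := wrapq hFmeas2 hFbound
  have IG' : Integrable (fun x : ℝ × ℝ => G x.2 * q' x) := wrap' hGmeas2 hGbound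
  have IGq : Integrable (fun x : ℝ × ℝ => G x.2 * q x) := wrapq hGmeas2 hGbound
  have IL' : Integrable (fun x : ℝ × ℝ => Real.log (q x) * q' x) := wrap' hLmeas hLbound
  have ILq : Integrable (fun x : ℝ × ℝ => Real.log (q x) * q x) := wrapq hLmeas hLbound
  have Iq : Integrable q := integrable_biGauss μ₀ μ₁ hσ₀ hσ₁ hρ0.le hρsq
  have Intq : ∫ x : ℝ × ℝ, q x = 1 := integral_biGauss μ₀ μ₁ hσ₀ hσ₁ hρ0.le hρsq
  -- marginal computations
  have hqmarg0 : ∀ᵐ t ∂(volume : Measure ℝ), (∫ s, q (t, s)) = gauss1 μ₀ σ₀ t :=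
    Filter.Eventually.of_forall (fun t => biGauss_marg1 μ₀ μ₁ hσ₀ hσ₁ hρsq t)
  have hqmarg1 : ∀ᵐ t ∂(volume : Measure ℝ), (∫ s, q (s, t)) = gauss1 μ₁ σ₁ t :=
    Filter.Eventually.of_forall (fun t => biGauss_marg0 μ₀ μ₁ hσ₀ hσ₁ hρsq t)
  have hIF : ∫ x : ℝ × ℝ, F x.1 * q' x = ∫ x : ℝ × ℝ, F x.1 * q x := by
    rw [integral_fst_section IF' hmarg0, integral_fst_section IFq hqmarg0]
  have hIG : ∫ x : ℝ × ℝ, G x.2 * q' x = ∫ x : ℝ × ℝ, G x.2 * q x := by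
    rw [integral_snd_section IG' hmarg1, integral_snd_section IGq hqmarg1]
  -- split the cost integrals
  have hsplit' : ∫ x : ℝ × ℝ, (x.1 - x.2) ^ 2 / (2 * ε) * q' x
      = (∫ x : ℝ × ℝ, F x.1 * q' x) + (∫ x : ℝ × ℝ, G x.2 * q' x)
        - ∫ x : ℝ × ℝ, Real.log (q x) * q' x := by
    have heq : (fun x : ℝ × ℝ => (x.1 - x.2) ^ 2 / (2 * ε) * q' x)
        = fun x => (F x.1 * q' x + G x.2 * q' x) - Real.log (q x) * q' x := by
      funext x; rw [hkey x]; ring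
    have hadd : Integrable (fun x : ℝ × ℝ => F x.1 * q' x + G x.2 * q' x) := IF'.add IG'
    rw [heq, integral_sub hadd IL', integral_add IF' IG']
  have hsplitq : ∫ x : ℝ × ℝ, (x.1 - x.2) ^ 2 / (2 * ε) * q x
      = (∫ x : ℝ × ℝ, F x.1 * q x) + (∫ x : ℝ × ℝ, G x.2 * q x)
        - ∫ x : ℝ × ℝ, Real.log (q x) * q x := by
    have heq : (fun x : ℝ × ℝ => (x.1 - x.2) ^ 2 / (2 * ε) * q x)
        = fun x => (F x.1 * q x + G x.2 * q x) - Real.log (q x) * q x := by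
      funext x; rw [hkey x]; ring
    have hadd : Integrable (fun x : ℝ × ℝ => F x.1 * q x + G x.2 * q x) := IFq.add IGq
    rw [heq, integral_sub hadd ILq, integral_add IFq IGq]
  -- the relative entropy term
  have IL'' : Integrable (fun x : ℝ × ℝ => q' x * Real.log (q x)) := by
    refine IL'.congr ?_; filter_upwards with x; ring
  set h : ℝ × ℝ → ℝ :=
    fun x => q' x * Real.log (q' x) - q' x * Real.log (q x) - q' x + q x with hh
  have hInt : Integrable h := ((hent.sub IL'').sub hq'int).add Iq
  have hnn : ∀ x, 0 ≤ h x := fun x => klterm_nonneg (hq'nonneg x) (hqpos x)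
  have hne0 : ¬ (h =ᵐ[(volume : Measure (ℝ × ℝ))] 0) := by
    intro hc
    refine hne (hc.mono fun x hx => ?_)
    have hx' : h x = 0 := hx
    exact klterm_eq_zero (hq'nonneg x) (hqpos x) hx'
  have hpos : 0 < ∫ x : ℝ × ℝ, h x := by
    rw [integral_pos_iff_support_of_nonneg hnn hInt]
    refine pos_iff_ne_zero.2 ?_
    intro hz
    apply hne0
    rw [Filter.EventuallyEq, ae_iff]
    have hsupp : {x : ℝ × ℝ | ¬ h x = (0 : ℝ × ℝ → ℝ) x} = Function.support h := by
      ext x; simp [Function.support]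
    rw [hsupp, hz]
  have hIh : ∫ x : ℝ × ℝ, h x
      = (∫ x : ℝ × ℝ, q' x * Real.log (q' x)) - (∫ x : ℝ × ℝ, q' x * Real.log (q x))
        - (∫ x : ℝ × ℝ, q' x) + (∫ x : ℝ × ℝ, q x) := by
    rw [hh]
    have h3 : Integrable (fun x : ℝ × ℝ => q' x * Real.log (q' x) - q' x * Real.log (q x)) :=
      hent.sub IL''
    have h2 : Integrable (fun x : ℝ × ℝ =>
        q' x * Real.log (q' x) - q' x * Real.log (q x) - q' x) := h3.sub hq'int
    rw [integral_add h2 Iq, integral_sub h3 hq'int, integral_sub hent IL'']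
  -- commuting the products
  have hcomm1 : ∫ x : ℝ × ℝ, Real.log (q x) * q' x = ∫ x : ℝ × ℝ, q' x * Real.log (q x) := by
    congr 1; funext x; ring
  have hcomm2 : ∫ x : ℝ × ℝ, Real.log (q x) * q x = ∫ x : ℝ × ℝ, q x * Real.log (q x) := by
    congr 1; funext x; ring
  -- conclusion
  simp only [diffEntropy2]
  linarith [hsplit', hsplitq, hIF, hIG, hIh, hpos, hq'prob, Intq, hcomm1, hcomm2]
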